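/- For every number of topics t ≥ 1 there exist a number of voters n ≥ 1 and a voter matrix V : Fin n → Fin t → Bool in which every column has majority Y, such that every proposal that is supported by a majority of voters has at most ⌈(t+1)/2⌉ entries equal to true. (Consequently md_t ≤ ⌈(t+1)/2⌉, where md_t is the minimum over voter matrices of the maximum number of majority decisions achievable by a majority-supported proposal.) -/

import Mathlib

open Finset

/-- Number of topics on which opinion vector `v` agrees with proposal `p`. -/
def agreeCount {t : ℕ} (v p : Fin t → Bool) : ℕ :=
  (univ.filter (fun j => v j = p j)).card

/-- Voter `v` supports proposal `p`: agreement on at least half the topics,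
    i.e. `2 * |{j : v j = p j}| ≥ t`. -/
def Supports {t : ℕ} (v p : Fin t → Bool) : Prop :=
  t ≤ 2 * agreeCount v p

instance {t : ℕ} (v p : Fin t → Bool) : Decidable (Supports v p) :=
  Nat.decLe _ _

/-- Proposal `p` is supported by a majority of the voters of `V`:
    `2 * |{i : voter i supports p}| ≥ n`. -/
def MajSupported {n t : ℕ} (V : Fin n → Fin t → Bool) (p : Fin t → Bool) : Prop :=
  n ≤ 2 * (univ.filter (fun i => Supports (V i) p)).card

/-- Column `j` of `V` has majority Y: `2 * |{i : V i j = true}| ≥ n`. -/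
def ColMajority {n t : ℕ} (V : Fin n → Fin t → Bool) (j : Fin t) : Prop :=
  n ≤ 2 * (univ.filter (fun i => V i j = true)).card

/-- Number of true entries of a vector. -/
def trueCount {t : ℕ} (p : Fin t → Bool) : ℕ :=
  (univ.filter (fun j => p j = true)).card

/-- Number of matching opinions between the voters of `V` and proposal `p`. -/
def matchCount {n t : ℕ} (V : Fin n → Fin t → Bool) (p : Fin t → Bool) : ℕ :=
  (univ.filter (fun ij : Fin n × Fin t => V ij.1 ij.2 = p ij.2)).card

/-- there is a voter matrix with all-Y column majorities for which every
majority-supported proposal has at most ⌈(t+1)/2⌉ = (t+2)/2 true entries. -/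
theorem md_upper_bound (t : ℕ) (ht : 1 ≤ t) :
    ∃ n : ℕ, 1 ≤ n ∧ ∃ V : Fin n → Fin t → Bool,
      (∀ j, ColMajority V j) ∧
      ∀ p : Fin t → Bool, MajSupported V p → trueCount p ≤ (t + 2) / 2 := by
  refine ⟨2*t+1, by omega,
    (fun i j => if i.val < t then decide (i.val = j.val) else decide (t < i.val)), ?_, ?_⟩
  · -- column majority
    intro j
    unfold ColMajority
    set f : Fin t ↪ Fin (2*t+1) :=
      ⟨fun a => ⟨t+1+a.val, by omega⟩, by
        intro a b h
        simpa [Fin.ext_iff] using h⟩ with hf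
    have hnotmem : (⟨j.val, by omega⟩ : Fin (2*t+1)) ∉ (univ : Finset (Fin t)).map f := by
      simp only [mem_map, mem_univ, true_and, hf, Function.Embedding.coeFn_mk, Fin.ext_iff]
      rintro ⟨a, ha⟩
      change t+1+a.val = j.val at ha
      have := j.isLt
      omega
    have hsub : insert (⟨j.val, by omega⟩ : Fin (2*t+1)) ((univ : Finset (Fin t)).map f)
        ⊆ univ.filter (fun i : Fin (2*t+1) =>
          (if i.val < t then decide (i.val = j.val) else decide (t < i.val)) = true) := by
      intro i hi
      simp only [mem_insert, mem_map, mem_univ, true_and, hf,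
        Function.Embedding.coeFn_mk] at hi
      rcases hi with rfl | ⟨a, rfl⟩
      · simp [j.isLt]
      · have h1 : ¬ (t+1+a.val < t) := by omega
        simp only [mem_filter, mem_univ, true_and, h1, if_false, decide_eq_true_eq]
        show (if t+1+a.val < t then decide (t+1+a.val = j.val) else decide (t < t+1+a.val)) = true
        simp only [h1, if_false, decide_eq_true_eq]
        omega
    have hcard := card_le_card hsub
    rw [card_insert_of_notMem hnotmem, card_map, card_univ, Fintype.card_fin] at hcard
    show 2*t+1 ≤ 2 * (univ.filter (fun i : Fin (2*t+1) =>
      (if i.val < t then decide (i.val = j.val) else decide (t < i.val)) = true)).card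
    omega
  · -- main bound
    intro p hmaj
    by_contra hk
    have hk3 : t + 3 ≤ 2 * trueCount p := by omega
    have hkt : trueCount p ≤ t := by
      have := card_le_card (filter_subset (fun j => p j = true) (univ : Finset (Fin t)))
      simpa [trueCount] using this
    have hfalse : (univ.filter (fun j => p j = false)).card = t - trueCount p := by
      have h := card_filter_add_card_filter_not
        (s := (univ : Finset (Fin t))) (p := fun j => p j = true)
      have he : (univ.filter (fun j => ¬ (p j = true))) = (univ.filter (fun j => p j = false)) := by
        apply filter_congr
        intro j _
        simp
      rw [he] at h
      simp only [card_univ, Fintype.card_fin] at h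
      unfold trueCount at hk3 hkt ⊢
      omega
    -- every voter with index ≤ t rejects p
    have hrej : ∀ i : Fin (2*t+1), i.val ≤ t →
        ¬ Supports (fun j => if i.val < t then decide (i.val = j.val) else decide (t < i.val)) p := by
      intro i hit hsupp
      set v : Fin t → Bool := fun j => if i.val < t then decide (i.val = j.val) else decide (t < i.val) with hv
      have hone : (univ.filter (fun j => v j = true)).card ≤ 1 := by
        rw [card_le_one]
        intro a ha b hb
        simp only [mem_filter, mem_univ, true_and, hv] at ha hb
        by_cases hlt : i.val < t
        · simp only [hlt, if_true, decide_eq_true_eq] at ha hb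
          exact Fin.ext (ha ▸ hb ▸ rfl)
        · exfalso
          simp only [hlt, if_false, decide_eq_true_eq] at ha
          omega
      have hsubagree : (univ.filter (fun j => v j = p j)) ⊆
          (univ.filter (fun j => p j = false)) ∪ (univ.filter (fun j => v j = true)) := by
        intro j hj
        simp only [mem_filter, mem_univ, true_and, mem_union] at hj ⊢
        cases hpj : p j with
        | false => exact Or.inl rfl
        | true => exact Or.inr (hj.trans hpj)
      have hagree : agreeCount v p ≤ (t - trueCount p) + 1 := by
        unfold agreeCount
        calc (univ.filter (fun j => v j = p j)).card
            ≤ ((univ.filter (fun j => p j = false)) ∪ (univ.filter (fun j => v j = true))).card :=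
              card_le_card hsubagree
          _ ≤ (univ.filter (fun j => p j = false)).card + (univ.filter (fun j => v j = true)).card :=
              card_union_le _ _
          _ ≤ (t - trueCount p) + 1 := by omega
      unfold Supports at hsupp
      omega
    -- supporters are among the t all-true voters
    have hsub2 : (univ.filter (fun i : Fin (2*t+1) =>
        Supports (fun j => if i.val < t then decide (i.val = j.val) else decide (t < i.val)) p))
        ⊆ (univ : Finset (Fin t)).map
          ⟨fun a => (⟨t+1+a.val, by omega⟩ : Fin (2*t+1)), by
            intro a b h; simpa [Fin.ext_iff] using h⟩ := by
      intro i hi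
      simp only [mem_filter, mem_univ, true_and] at hi
      have hgt : t < i.val := by
        by_contra h
        exact hrej i (by omega) hi
      simp only [mem_map, mem_univ, true_and, Function.Embedding.coeFn_mk]
      refine ⟨⟨i.val - (t+1), by omega⟩, ?_⟩
      apply Fin.ext
      show t+1+(i.val-(t+1)) = i.val
      omega
    have hc := card_le_card hsub2
    rw [card_map, card_univ, Fintype.card_fin] at hc
    have hmaj' : 2*t+1 ≤ 2 * (univ.filter (fun i : Fin (2*t+1) =>
        Supports (fun j => if i.val < t then decide (i.val = j.val) else decide (t < i.val)) p)).card := hmaj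
    omega
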